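/- As identities of End(V)[ℓ]-valued doubly infinite formal series in z: (i) D_z x^i(z) = α^i(z) for each i ∈ {1,2,3}; and (ii) D_z x*_i(z) = β_i(z) + ½ Σ_{j,k} ε_{ijk} x^j(z) · D_z x^k(z) for each i ∈ {1,2,3}. -/
import Mathlib


open Finset

/-- Levi-Civita symbol on `{1,2,3}` (indexed by `Fin 3`). -/
def eps (i j k : Fin 3) : ℤ :=
  (((j : ℤ) - (i : ℤ)) * ((k : ℤ) - (i : ℤ)) * ((k : ℤ) - (j : ℤ))) / 2

variable {V : Type*} [AddCommGroup V] [Module ℂ V]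

/-- `x^i_n`: equals the given `x^i_0` for `n = 0`, and `−(1/n) α^i_n` for `n ≠ 0`. -/
noncomputable def xop (α : Fin 3 → ℤ → Module.End ℂ V) (x0 : Fin 3 → Module.End ℂ V)
    (i : Fin 3) (n : ℤ) : Module.End ℂ V :=
  if n = 0 then x0 i else (-(n : ℂ)⁻¹) • α i n

/-- `P_i = β_{i,0} + Σ_{j,k} ε_{ijk} x^j_0 W^k − ½ Σ_{j,k} ε_{ijk} Σ_{m∈ℤ} m x^j_{−m} x^k_m`,
defined pointwise on vectors (the inner sum has finitely many nonzero terms on each vector). -/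
noncomputable def Pop (α β : Fin 3 → ℤ → Module.End ℂ V) (x0 : Fin 3 → Module.End ℂ V)
    (i : Fin 3) : V → V := fun v =>
  β i 0 v + (∑ j : Fin 3, ∑ k : Fin 3, eps i j k • (x0 j) ((α k 0) v))
    - (2 : ℂ)⁻¹ • ∑ j : Fin 3, ∑ k : Fin 3, eps i j k •
        ∑ᶠ m : ℤ, (m : ℂ) • (xop α x0 j (-m)) ((xop α x0 k m) v)

/-- `x*_{i,n} = −(1/n)(β_{i,n} + Σ_{j,k} ε_{ijk} x^j_n W^k − ½ Σ_{j,k} ε_{ijk} Σ_m m x^j_{n−m} x^k_m)`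
for `n ≠ 0`, defined pointwise on vectors. -/
noncomputable def xstarop (α β : Fin 3 → ℤ → Module.End ℂ V) (x0 : Fin 3 → Module.End ℂ V)
    (i : Fin 3) (n : ℤ) : V → V := fun v =>
  (-(n : ℂ)⁻¹) • (β i n v + (∑ j : Fin 3, ∑ k : Fin 3, eps i j k • (xop α x0 j n) ((α k 0) v))
    - (2 : ℂ)⁻¹ • ∑ j : Fin 3, ∑ k : Fin 3, eps i j k •
        ∑ᶠ m : ℤ, (m : ℂ) • (xop α x0 j (n - m)) ((xop α x0 k m) v))

variable (V) in
/-- A doubly infinite formal series in `z` with coefficients that are polynomials in `ℓ`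
with `End(V)`-valued coefficients, recorded pointwise: the value at `(m, j, v)` is the
coefficient of `z^{−m} ℓ^j` applied to `v`. -/
abbrev FormalSeries : Type _ := ℤ → ℕ → V → V

/-- The derivation `D_z = ∂_z + z^{−1} ∂_ℓ`, acting coefficientwise. -/
noncomputable def DzS (S : FormalSeries V) : FormalSeries V := fun m j v =>
  ((j : ℂ) + 1) • S (m - 1) (j + 1) v - ((m : ℂ) - 1) • S (m - 1) j v

/-- The coefficientwise product of two such series (each coefficient of the product,
applied to a fixed vector, is a finite sum, computed here by `finsum`). -/
noncomputable def mulS (S T : FormalSeries V) : FormalSeries V := fun m j v =>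
  ∑ j1 ∈ Finset.range (j + 1), ∑ᶠ m1 : ℤ, S m1 j1 (T (m - m1) (j - j1) v)

/-- The series `α^i(z) = Σ_n α^i_n z^{−1−n}`. -/
noncomputable def alphaS (α : Fin 3 → ℤ → Module.End ℂ V) (i : Fin 3) : FormalSeries V :=
  fun m j v => if j = 0 then α i (m - 1) v else 0

/-- The series `β_i(z) = Σ_n β_{i,n} z^{−1−n}`. -/
noncomputable def betaS (β : Fin 3 → ℤ → Module.End ℂ V) (i : Fin 3) : FormalSeries V :=
  fun m j v => if j = 0 then β i (m - 1) v else 0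

/-- The logarithmic series `x^i(z) = W^i ℓ + Σ_n x^i_n z^{−n}`. -/
noncomputable def xS (α : Fin 3 → ℤ → Module.End ℂ V) (x0 : Fin 3 → Module.End ℂ V)
    (i : Fin 3) : FormalSeries V := fun m j v =>
  if j = 0 then (xop α x0 i m) v else if j = 1 ∧ m = 0 then (α i 0) v else 0

/-- The logarithmic series
`x*_i(z) = P_i ℓ + Σ_n x*_{i,n} z^{−n} + (ℓ/2) Σ_{j,k} ε_{ijk} W^j x^k(z)`. -/
noncomputable def xstarS (α β : Fin 3 → ℤ → Module.End ℂ V)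
    (x0 xstar0 : Fin 3 → Module.End ℂ V) (i : Fin 3) : FormalSeries V := fun m j v =>
  (if j = 0 then (if m = 0 then xstar0 i v else xstarop α β x0 i m v) else 0)
  + (if j = 1 ∧ m = 0 then Pop α β x0 i v else 0)
  + (if 1 ≤ j then (2 : ℂ)⁻¹ • ∑ j' : Fin 3, ∑ k : Fin 3,
        eps i j' k • (α j' 0) (xS α x0 k m (j - 1) v) else 0)


namespace DzAux

lemma eps_swap : ∀ i j k : Fin 3, eps i k j = - eps i j k := by decide

lemma antisym {W : Type*} [AddCommGroup W] (A B : Fin 3 → W → W)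
    (h : ∀ j k w, A j (B k w) = B k (A j w)) (i : Fin 3) (v : W) :
    ∑ j : Fin 3, ∑ k : Fin 3, eps i j k • A j (B k v)
      = -∑ j : Fin 3, ∑ k : Fin 3, eps i j k • B j (A k v) := by
  have step : ∀ k j : Fin 3, eps i j k • A j (B k v) = -(eps i k j • B k (A j v)) := by
    intro k j
    rw [h j k v, eps_swap i k j, neg_smul]
  calc ∑ j : Fin 3, ∑ k : Fin 3, eps i j k • A j (B k v)
      = ∑ k : Fin 3, ∑ j : Fin 3, eps i j k • A j (B k v) := Finset.sum_comm
    _ = ∑ k : Fin 3, ∑ j : Fin 3, -(eps i k j • B k (A j v)) :=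
        Finset.sum_congr rfl fun k _ => Finset.sum_congr rfl fun j _ => step k j
    _ = -∑ k : Fin 3, ∑ j : Fin 3, eps i k j • B k (A j v) := by
        simp [Finset.sum_neg_distrib]

variable {V : Type*} [AddCommGroup V] [Module ℂ V]

lemma end_comm {a b : Module.End ℂ V} (h : ⁅a, b⁆ = 0) (v : V) : a (b v) = b (a v) := by
  have h2 : a * b = b * a := by rwa [Ring.lie_def, sub_eq_zero] at h
  have h3 := congrArg (fun e : Module.End ℂ V => e v) h2
  simpa [Module.End.mul_apply] using h3

variable (α : Fin 3 → ℤ → Module.End ℂ V) (x0 : Fin 3 → Module.End ℂ V)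

lemma xop_ne (i : Fin 3) {n : ℤ} (hn : n ≠ 0) (v : V) :
    xop α x0 i n v = (-(n : ℂ)⁻¹) • α i n v := by
  simp [xop, hn]

lemma xop_zero' (i : Fin 3) (v : V) : xop α x0 i 0 v = x0 i v := by simp [xop]

end DzAux

namespace DzAux
variable {V : Type*} [AddCommGroup V] [Module ℂ V]
variable (α : Fin 3 → ℤ → Module.End ℂ V) (x0 : Fin 3 → Module.End ℂ V)

lemma supp1 (hcomm : ∀ (j k : Fin 3) (p q : ℤ) (w : V), α j p (α k q w) = α k q (α j p w))
    (j' k : Fin 3) (n : ℤ) (v : V) {N : ℤ}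
    (hN : ∀ (i : Fin 3) (q : ℤ), N ≤ q → α i q v = 0) :
    (Function.support fun m => xop α x0 j' m (α k (n - m) v)).Finite := by
  apply Set.Finite.subset (Set.finite_Icc (n - max N 1) (max N 1))
  intro m hm
  rw [Function.mem_support] at hm
  by_contra hmem
  apply hm
  rw [Set.mem_Icc, not_and_or] at hmem
  rcases hmem with h1 | h2
  · push_neg at h1
    rw [hN k (n - m) (by omega), map_zero]
  · push_neg at h2
    have hm0 : m ≠ 0 := by omega
    rw [xop_ne α x0 j' hm0, hcomm j' k m (n - m) v, hN j' m (by omega), map_zero, smul_zero]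

lemma supp2 (hcomm : ∀ (j k : Fin 3) (p q : ℤ) (w : V),
      α j p (xop α x0 k q w) = xop α x0 k q (α j p w))
    (j' k : Fin 3) (n : ℤ) (v : V) {N : ℤ}
    (hN : ∀ (i : Fin 3) (q : ℤ), N ≤ q → α i q v = 0) :
    (Function.support fun m =>
      ((n - m : ℤ) : ℂ) • xop α x0 j' m (xop α x0 k (n - m) v)).Finite := by
  apply Set.Finite.subset (Set.finite_Icc (n - max N 1) (max N 1))
  intro m hm
  rw [Function.mem_support] at hm
  by_contra hmem
  apply hm
  rw [Set.mem_Icc, not_and_or] at hmem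
  rcases hmem with h1 | h2
  · push_neg at h1
    have hnm : n - m ≠ 0 := by omega
    rw [xop_ne α x0 k hnm, hN k (n - m) (by omega), smul_zero, map_zero, smul_zero]
  · push_neg at h2
    have hm0 : m ≠ 0 := by omega
    rw [xop_ne α x0 j' hm0, hcomm j' k m (n - m) v, hN j' m (by omega), map_zero, smul_zero,
      smul_zero]

lemma key (j' k : Fin 3) (n : ℤ) (v : V)
    (hf : (Function.support fun m => xop α x0 j' m (α k (n - m) v)).Finite)
    (hg : (Function.support fun m =>
      ((n - m : ℤ) : ℂ) • xop α x0 j' m (xop α x0 k (n - m) v)).Finite) :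
    ∑ᶠ m : ℤ, xop α x0 j' m (α k (n - m) v)
      = xop α x0 j' n (α k 0 v)
        - ∑ᶠ m : ℤ, (m : ℂ) • xop α x0 j' (n - m) (xop α x0 k m v) := by
  have hptw : ∀ m : ℤ, xop α x0 j' m (α k (n - m) v)
      + ((n - m : ℤ) : ℂ) • xop α x0 j' m (xop α x0 k (n - m) v)
      = if m = n then xop α x0 j' n (α k 0 v) else 0 := by
    intro m
    by_cases hm : m = n
    · subst hm; simp
    · have hnm : n - m ≠ 0 := sub_ne_zero.mpr (Ne.symm hm)
      rw [if_neg hm, xop_ne α x0 k hnm, map_smul, smul_smul,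
        show ((n - m : ℤ) : ℂ) * (-((n - m : ℤ) : ℂ)⁻¹) = -1 by
          rw [mul_neg, mul_inv_cancel₀ (Int.cast_ne_zero.mpr hnm)],
        neg_one_smul]
      exact add_neg_cancel _
  have h1 : (∑ᶠ m : ℤ, (xop α x0 j' m (α k (n - m) v)
      + ((n - m : ℤ) : ℂ) • xop α x0 j' m (xop α x0 k (n - m) v)))
      = xop α x0 j' n (α k 0 v) := by
    rw [finsum_congr hptw, finsum_eq_single _ n (fun m hm => if_neg hm), if_pos rfl]
  rw [finsum_add_distrib hf hg] at h1
  have h2 : (∑ᶠ m : ℤ, ((n - m : ℤ) : ℂ) • xop α x0 j' m (xop α x0 k (n - m) v))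
      = ∑ᶠ m : ℤ, (m : ℂ) • xop α x0 j' (n - m) (xop α x0 k m v) := by
    rw [← finsum_comp_equiv (Equiv.subLeft n)
      (f := fun m => (m : ℂ) • xop α x0 j' (n - m) (xop α x0 k m v))]
    apply finsum_congr; intro m
    simp [Equiv.subLeft_apply, sub_sub_cancel]
  rw [h2] at h1
  exact eq_sub_of_add_eq h1

end DzAux

namespace DzAux
variable {V : Type*} [AddCommGroup V] [Module ℂ V]
variable (α : Fin 3 → ℤ → Module.End ℂ V) (x0 : Fin 3 → Module.End ℂ V)

lemma xS_zero (i : Fin 3) (m : ℤ) (j : ℕ) : xS α x0 i m j 0 = 0 := by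
  simp only [xS]
  split_ifs <;> simp

lemma part1 (i : Fin 3) : DzS (xS α x0 i) = alphaS α i := by
  funext m j v
  match j with
  | 0 =>
    simp only [DzS, xS, alphaS, if_pos rfl]
    norm_num
    by_cases hm : m = 1
    · subst hm
      norm_num [xop]
    · have h0 : m - 1 ≠ 0 := by omega
      rw [if_neg h0, xop_ne α x0 i h0, smul_smul,
        show ((m : ℂ) - 1) * (-((m - 1 : ℤ) : ℂ)⁻¹) = -1 by
          push_cast
          rw [mul_neg, mul_inv_cancel₀ (by
            have := (Int.cast_ne_zero (α := ℂ)).mpr h0; push_cast at this; exact this)]]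
      simp
  | 1 =>
    simp only [DzS, xS, alphaS]
    norm_num
    intro h
    left
    have : m = 1 := by omega
    subst this; norm_num
  | (J + 2) =>
    simp only [DzS, xS, alphaS]
    norm_num
    intro h
    exact absurd h (by omega)

end DzAux

namespace DzAux
variable {V : Type*} [AddCommGroup V] [Module ℂ V]
variable (α : Fin 3 → ℤ → Module.End ℂ V) (x0 : Fin 3 → Module.End ℂ V)

lemma hmul (j' k : Fin 3) (m : ℤ) (j : ℕ) (v : V) :
    mulS (xS α x0 j') (DzS (xS α x0 k)) m j v
      = ∑ᶠ m1 : ℤ, xS α x0 j' m1 j (α k (m - m1 - 1) v) := by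
  rw [part1 α x0 k]
  simp only [mulS, alphaS]
  rw [Finset.sum_eq_single j]
  · simp
  · intro j1 h1 hne
    have hj : ¬ (j - j1 = 0) := by rw [Finset.mem_range] at h1; omega
    simp only [if_neg hj, xS_zero, finsum_zero]
  · intro h
    exact absurd (Finset.self_mem_range_succ j) h

end DzAux
theorem Dz_x_and_xstar
    (α β : Fin 3 → ℤ → Module.End ℂ V) (x0 xstar0 : Fin 3 → Module.End ℂ V)
    (R1 : ∀ (i j : Fin 3) (m n : ℤ), ⁅α i m, α j n⁆ = 0)
    (R2 : ∀ (i j : Fin 3) (m n : ℤ), ⁅β i m, α j n⁆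
      = if i = j ∧ m + n = 0 then (m : ℂ) • (1 : Module.End ℂ V) else 0)
    (R3 : ∀ (i j : Fin 3) (m n : ℤ), ⁅β i m, β j n⁆ = ∑ k : Fin 3, eps i j k • α k (m + n))
    (R4 : ∀ v : V, ∃ N : ℤ, ∀ (i : Fin 3) (n : ℤ), N ≤ n → α i n v = 0 ∧ β i n v = 0)
    (R5a : ∀ (i j : Fin 3) (n : ℤ), ⁅α j n, x0 i⁆ = 0)
    (R5b : ∀ i j : Fin 3, ⁅x0 i, x0 j⁆ = 0)
    (R6 : ∀ (i j : Fin 3) (n : ℤ), ⁅β j n, x0 i⁆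
      = if i = j ∧ n = 0 then (1 : Module.End ℂ V) else 0)
    (R7 : ∀ (i j : Fin 3) (n : ℤ), ⁅xstar0 i, xop α x0 j n⁆ = 0)
    (R8 : ∀ i j : Fin 3, ⁅xstar0 i, xstar0 j⁆ = 0)
    (R9 : ∀ (i j : Fin 3) (n : ℤ), ⁅xstar0 i, β j n⁆
      = (2 : ℂ)⁻¹ • ∑ k : Fin 3, eps i j k • xop α x0 k n)
    (R10 : ∀ (i j : Fin 3) (m : ℤ), ⁅α j m, xstar0 i⁆
      = if i = j ∧ m = 0 then (1 : Module.End ℂ V) else 0) :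
    (∀ (i : Fin 3), DzS (xS α x0 i) = alphaS α i) ∧
    (∀ (i : Fin 3) (m : ℤ) (j : ℕ) (v : V),
      DzS (xstarS α β x0 xstar0 i) m j v
        = betaS β i m j v + (2 : ℂ)⁻¹ • ∑ j' : Fin 3, ∑ k : Fin 3,
            eps i j' k • mulS (xS α x0 j') (DzS (xS α x0 k)) m j v) := by
  have hc1 : ∀ (j k : Fin 3) (p q : ℤ) (w : V), α j p (α k q w) = α k q (α j p w) :=
    fun j k p q w => DzAux.end_comm (R1 j k p q) w
  have hc0 : ∀ (j k : Fin 3) (p : ℤ) (w : V), α j p (x0 k w) = x0 k (α j p w) :=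
    fun j k p w => DzAux.end_comm (R5a k j p) w
  have hc2 : ∀ (j k : Fin 3) (p q : ℤ) (w : V),
      α j p (xop α x0 k q w) = xop α x0 k q (α j p w) := by
    intro j k p q w
    by_cases hq : q = 0
    · subst hq; rw [DzAux.xop_zero', DzAux.xop_zero']; exact hc0 j k p w
    · rw [DzAux.xop_ne α x0 k hq, DzAux.xop_ne α x0 k hq, map_smul, hc1 j k p q w]
  have hkey : ∀ (j' k : Fin 3) (n : ℤ) (w : V),
      (∑ᶠ m1 : ℤ, xop α x0 j' m1 (α k (n - m1) w))
        = xop α x0 j' n (α k 0 w)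
          - ∑ᶠ m1 : ℤ, (m1 : ℂ) • xop α x0 j' (n - m1) (xop α x0 k m1 w) := by
    intro j' k n w
    obtain ⟨N, hN⟩ := R4 w
    exact DzAux.key α x0 j' k n w
      (DzAux.supp1 α x0 hc1 j' k n w (fun i q hq => (hN i q hq).1))
      (DzAux.supp2 α x0 hc2 j' k n w (fun i q hq => (hN i q hq).1))
  have hA1 : ∀ (i : Fin 3) (w : V),
      (∑ j : Fin 3, ∑ k : Fin 3, eps i j k • α j 0 (α k 0 w)) = 0 := by
    intro i w
    have h := DzAux.antisym (fun j w => α j 0 w) (fun k w => α k 0 w)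
      (fun j k w => hc1 j k 0 0 w) i w
    have h2 : (2 : ℂ) • (∑ j : Fin 3, ∑ k : Fin 3, eps i j k • α j 0 (α k 0 w)) = 0 := by
      rw [two_smul]
      nth_rewrite 1 [h]
      exact neg_add_cancel _
    have h3 := congrArg (fun u => (2⁻¹ : ℂ) • u) h2
    simpa [smul_smul] using h3
  have hA2 : ∀ (i : Fin 3) (w : V),
      (∑ j : Fin 3, ∑ k : Fin 3, eps i j k • x0 j (α k 0 w))
        = -∑ j : Fin 3, ∑ k : Fin 3, eps i j k • α j 0 (x0 k w) :=
    fun i w => DzAux.antisym (fun j u => x0 j u) (fun k u => α k 0 u)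
      (fun j k u => (hc0 k j 0 u).symm) i w
  have hA3 : ∀ (i : Fin 3) (n : ℤ) (w : V),
      (∑ j : Fin 3, ∑ k : Fin 3, eps i j k • α j 0 (xop α x0 k n w))
        = -∑ j : Fin 3, ∑ k : Fin 3, eps i j k • xop α x0 j n (α k 0 w) :=
    fun i n w => DzAux.antisym (fun j u => α j 0 u) (fun k u => xop α x0 k n u)
      (fun j k u => hc2 j k 0 n u) i w
  refine ⟨DzAux.part1 α x0, ?_⟩
  intro i m j v
  have hR : (∑ j' : Fin 3, ∑ k : Fin 3, eps i j' k •
        mulS (xS α x0 j') (DzS (xS α x0 k)) m j v)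
      = ∑ j' : Fin 3, ∑ k : Fin 3, eps i j' k •
        (∑ᶠ m1 : ℤ, xS α x0 j' m1 j (α k (m - m1 - 1) v)) :=
    Finset.sum_congr rfl fun j' _ => Finset.sum_congr rfl fun k _ => by
      rw [DzAux.hmul]
  rw [hR]
  match j with
  | 0 =>
    simp only [DzS, xstarS, betaS, xS]
    norm_num
    have hsub : ∀ m1 : ℤ, m - m1 - 1 = m - 1 - m1 := fun m1 => by ring
    simp only [hsub, hkey, smul_sub, Finset.sum_sub_distrib]
    by_cases hm : m - 1 = 0
    · have hm' : m = 1 := by omega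
      have hc : (m : ℂ) - 1 = 0 := by subst hm'; norm_num
      simp only [hm, hc, zero_smul, DzAux.xop_zero', Pop, zero_sub, reduceIte]
      rw [hA2 i v]
      module
    · simp only [if_neg hm, xstarop]
      rw [hA3 i (m - 1) v]
      have hcast : ((m - 1 : ℤ) : ℂ) ≠ 0 := Int.cast_ne_zero.mpr hm
      match_scalars <;> (push_cast; push_cast at hcast; field_simp; try ring)
  | 1 =>
    simp only [DzS, xstarS, betaS, xS]
    norm_num
    have hfs : ∀ x y : Fin 3,
        (∑ᶠ m1 : ℤ, if m1 = 0 then (α x 0) ((α y (m - m1 - 1)) v) else 0)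
          = (α x 0) ((α y (m - 1)) v) := by
      intro x y
      rw [finsum_eq_single _ 0 (fun m1 h => if_neg h), if_pos rfl]
      norm_num
    simp only [hfs]
    by_cases hm : m - 1 = 0
    · have hm' : m = 1 := by omega
      have hc : (m : ℂ) - 1 = 0 := by subst hm'; norm_num
      simp only [hm, hc, zero_smul, reduceIte, hA1 i v, smul_zero, sub_zero, add_zero, zero_add]
    · have hx : ∀ y : Fin 3, xop α x0 y (m - 1) v
          = (-((m - 1 : ℤ) : ℂ)⁻¹) • α y (m - 1) v := fun y => DzAux.xop_ne α x0 y hm v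
      have hcast : ((m - 1 : ℤ) : ℂ) ≠ 0 := Int.cast_ne_zero.mpr hm
      simp only [if_neg hm, hx, map_smul, map_zero, smul_zero, smul_comm
        (M := ℤ) (N := ℂ), ← Finset.smul_sum, Finset.sum_const_zero]
      match_scalars <;> (push_cast; push_cast at hcast; field_simp; try ring)
  | (J + 2) =>
    simp only [DzS, xstarS, betaS, xS]
    norm_num
    have hJ : ¬ (J + 2 = 1) := by omega
    by_cases hm : m - 1 = 0
    · have hm' : m = 1 := by omega
      have hc : (m : ℂ) - 1 = 0 := by subst hm'; norm_num
      simp [hJ, hc]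
    · simp [hJ, hm]
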